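/- Let v_i and v_j be two distinct nodes such that parent⁻¹(v_i) = {e_i} and parent⁻¹(v_j) = {e_j} for edges e_i ≠ e_j, such that for every index k one has e_i ∈ P_k if and only if e_j ∈ P_k, and such that Δw(e_i) ≤ Δw(e_j). Let S ⊆ V be any upgrade set with v_i ∈ S and v_j ∉ S, and set S* := (S \ {v_i}) ∪ {v_j}. Then |S*| = |S| and val(S*) ≥ val(S); that is, replacing the upgraded node whose edge has the smaller deviation by the node whose edge has the larger deviation on the same set of root-leaf paths does not decrease the shortest root-leaf distance and does not change the number of upgraded nodes. -/

import Mathlib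

/-- The shortest root-leaf distance of a node-upgrade instance after upgrading
the node set `S`: the minimum over the paths `P k` of the sum of the upgraded
weights, where an edge `e` has weight `u e` if its forward node `parent e`
is upgraded and `w e` otherwise. -/
noncomputable def sval {V E : Type*} [DecidableEq V] {l : ℕ}
    (parent : E → V) (w u : E → ℝ) (P : Fin l → Finset E) (hl : 0 < l)
    (S : Finset V) : ℝ :=
  Finset.univ.inf' (Finset.univ_nonempty_iff.mpr ⟨⟨0, hl⟩⟩)
    fun k => ∑ e ∈ P k, if parent e ∈ S then u e else w e

theorem stmt0 {V E : Type*} [Fintype V] [DecidableEq V] [Fintype E] [DecidableEq E]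
    (parent : E → V) (w u : E → ℝ) (hwu : ∀ e, w e ≤ u e)
    {l : ℕ} (hl : 0 < l) (P : Fin l → Finset E)
    (vi vj : V) (hv : vi ≠ vj) (ei ej : E) (he : ei ≠ ej)
    (hpi : ∀ e, parent e = vi ↔ e = ei)
    (hpj : ∀ e, parent e = vj ↔ e = ej)
    (hP : ∀ k : Fin l, ei ∈ P k ↔ ej ∈ P k)
    (hdev : u ei - w ei ≤ u ej - w ej)
    (S : Finset V) (hiS : vi ∈ S) (hjS : vj ∉ S) :
    ((S \ {vi}) ∪ {vj}).card = S.card ∧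
      sval parent w u P hl S ≤ sval parent w u P hl ((S \ {vi}) ∪ {vj}) := by
  set S' : Finset V := (S \ {vi}) ∪ {vj} with hS'
  have hmem : ∀ x : V, x ∈ S' ↔ (x ∈ S ∧ x ≠ vi) ∨ x = vj := by
    intro x; simp [hS', Finset.mem_union, Finset.mem_sdiff]; tauto
  constructor
  · have hdisj : Disjoint (S \ {vi}) ({vj} : Finset V) := by
      simp [Finset.disjoint_singleton_right, hjS]
    rw [hS', Finset.card_union_of_disjoint hdisj, Finset.sdiff_singleton_eq_erase,
      Finset.card_erase_of_mem hiS, Finset.card_singleton]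
    have := Finset.card_pos.mpr ⟨vi, hiS⟩
    omega
  · apply Finset.le_inf'
    intro k _
    have key : sval parent w u P hl S ≤ ∑ e ∈ P k, if parent e ∈ S' then u e else w e := by
      have hle : (∑ e ∈ P k, if parent e ∈ S then u e else w e) ≤
          ∑ e ∈ P k, if parent e ∈ S' then u e else w e := by
        have heq : ∀ e ∈ P k, e ≠ ei → e ≠ ej →
            (if parent e ∈ S then u e else w e) = (if parent e ∈ S' then u e else w e) := by
          intro e _ hei hej
          have h1 : parent e ≠ vi := fun h => hei ((hpi e).mp h)
          have h2 : parent e ≠ vj := fun h => hej ((hpj e).mp h)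
          have : parent e ∈ S' ↔ parent e ∈ S := by
            rw [hmem]; simp [h1, h2]
          simp [this]
        by_cases hin : ei ∈ P k
        · have hjn : ej ∈ P k := (hP k).mp hin
          have hjn' : ej ∈ (P k).erase ei := Finset.mem_erase.mpr ⟨(Ne.symm he), hjn⟩
          have hsplit : ∀ f : E → ℝ,
              (∑ e ∈ P k, f e) = f ei + (f ej + ∑ e ∈ ((P k).erase ei).erase ej, f e) := by
            intro f
            rw [Finset.add_sum_erase _ f hjn', Finset.add_sum_erase _ f hin]
          rw [hsplit, hsplit]
          have h1 : parent ei ∈ S := by rw [(hpi ei).mpr rfl]; exact hiS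
          have h2 : parent ei ∉ S' := by
            rw [(hpi ei).mpr rfl, hmem]; simp [hv]
          have h3 : parent ej ∉ S := by rw [(hpj ej).mpr rfl]; exact hjS
          have h4 : parent ej ∈ S' := by rw [(hpj ej).mpr rfl, hmem]; simp
          have hrest : (∑ e ∈ ((P k).erase ei).erase ej, if parent e ∈ S then u e else w e)
              = ∑ e ∈ ((P k).erase ei).erase ej, if parent e ∈ S' then u e else w e := by
            apply Finset.sum_congr rfl
            intro e hme
            have hme' := Finset.mem_erase.mp hme
            have hme'' := Finset.mem_erase.mp hme'.2
            exact heq e hme''.2 hme''.1 hme'.1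
          rw [hrest]
          simp only [if_pos h1, if_neg h2, if_neg h3, if_pos h4]
          linarith
        · have hjn : ej ∉ P k := fun h => hin ((hP k).mpr h)
          apply le_of_eq
          apply Finset.sum_congr rfl
          intro e hme
          exact heq e hme (fun h => hin (h ▸ hme)) (fun h => hjn (h ▸ hme))
      calc sval parent w u P hl S ≤ ∑ e ∈ P k, if parent e ∈ S then u e else w e :=
            Finset.inf'_le _ (Finset.mem_univ k)
        _ ≤ _ := hle
    exact key
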